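/- Let p be an odd prime and P a finite p-group. Let r, s ∈ P and let H be the subgroup of P generated by {r, s}. If s = h*r*h⁻¹ for some h ∈ H, then r and s commute. -/

import Mathlib

open Subgroup
open scoped commutatorElement

/-- A subgroup containing the commutator subgroup is normal. -/
private lemma normal_of_commutator_le {G : Type*} [Group G] {H : Subgroup G}
    (h : commutator G ≤ H) : H.Normal := by
  constructor
  intro n hn g
  have hc : ⁅g, n⁆ ∈ commutator G :=
    Subgroup.commutator_mem_commutator (Subgroup.mem_top g) (Subgroup.mem_top n)
  have : g * n * g⁻¹ = ⁅g, n⁆ * n := by group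
  rw [this]
  exact mul_mem (h hc) hn

/-- In a finite group, the commutator of each coatom-quotient is trivial:
the commutator subgroup is contained in every normal coatom. -/
private lemma commutator_le_coatom {G : Type*} [Group G] {K : Subgroup G} [hN : K.Normal]
    (hK : IsCoatom K) : commutator G ≤ K := by
  -- the quotient is cyclic, hence abelian
  have hcyc : ∀ a b : G ⧸ K, a * b = b * a := by
    have : IsCyclic (G ⧸ K) := by
      by_cases htriv : ∀ x : G ⧸ K, x = 1
      · exact ⟨1, fun x => by rw [htriv x]; exact one_mem (Subgroup.zpowers (1 : G ⧸ K))⟩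
      · push_neg at htriv
        obtain ⟨x, hx⟩ := htriv
        obtain ⟨g, rfl⟩ := QuotientGroup.mk_surjective x
        have hlt : K < Subgroup.comap (QuotientGroup.mk' K) (Subgroup.zpowers ((g : G ⧸ K))) := by
          refine lt_of_le_of_ne ?_ ?_
          · intro k hk
            have : (QuotientGroup.mk' K) k = 1 := (QuotientGroup.eq_one_iff k).mpr hk
            simp only [Subgroup.mem_comap, this]
            exact one_mem _
          · intro heq
            have hg : g ∈ Subgroup.comap (QuotientGroup.mk' K) (Subgroup.zpowers ((g : G ⧸ K))) :=
              Subgroup.mem_comap.mpr (Subgroup.mem_zpowers _)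
            rw [← heq] at hg
            exact hx ((QuotientGroup.eq_one_iff g).mpr hg)
        have htop := hK.2 _ hlt
        have : Subgroup.zpowers ((g : G ⧸ K)) = ⊤ := by
          have := congrArg (Subgroup.map (QuotientGroup.mk' K)) htop
          rwa [Subgroup.map_comap_eq_self_of_surjective (QuotientGroup.mk'_surjective K),
            Subgroup.map_top_of_surjective _ (QuotientGroup.mk'_surjective K)] at this
        exact ⟨⟨(g : G ⧸ K), fun y => (Subgroup.eq_top_iff' _).mp this y⟩⟩
    obtain ⟨c, hc⟩ := this.exists_generator
    intro a b
    obtain ⟨m, hm⟩ := hc a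
    obtain ⟨n, hn⟩ := hc b
    rw [← hm, ← hn]
    exact ((Commute.refl c).zpow_zpow m n).eq
  rw [_root_.commutator_def, Subgroup.commutator_le]
  intro g _ h _
  rw [← QuotientGroup.eq_one_iff]
  have : ((⁅g, h⁆ : G) : G ⧸ K) = ⁅(g : G ⧸ K), (h : G ⧸ K)⁆ := by
    simp [commutatorElement_def]
  rw [this]
  exact commutatorElement_eq_one_iff_mul_comm.mpr (hcyc _ _)

/-- In a finite nilpotent group, the commutator subgroup is contained in the
Frattini subgroup. -/
private lemma commutator_le_frattini {G : Type*} [Group G] [Finite G] [Group.IsNilpotent G] :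
    commutator G ≤ frattini G := by
  rw [frattini, Order.radical, le_iInf_iff]
  intro K
  rw [le_iInf_iff]
  intro hK
  have hnorm : K.Normal :=
    Subgroup.NormalizerCondition.normal_of_coatom K normalizerCondition_of_isNilpotent hK
  exact commutator_le_coatom hK

/-- In a finite nilpotent group, if the normal closure of `{x}` is everything then
`x` generates the group. -/
private lemma zpowers_eq_top_of_normalClosure {G : Type*} [Group G] [Finite G]
    [Group.IsNilpotent G] {x : G} (h : Subgroup.normalClosure {x} = ⊤) :
    Subgroup.zpowers x = ⊤ := by
  have hN : (Subgroup.zpowers x ⊔ commutator G).Normal :=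
    normal_of_commutator_le le_sup_right
  have h1 : Subgroup.zpowers x ⊔ commutator G = ⊤ := by
    rw [eq_top_iff, ← h]
    refine Subgroup.normalClosure_le_normal ?_
    intro y hy
    rw [Set.mem_singleton_iff] at hy
    subst hy
    exact SetLike.mem_coe.mpr (Subgroup.mem_sup_left (Subgroup.mem_zpowers y))
  have h2 : Subgroup.zpowers x ⊔ frattini G = ⊤ :=
    eq_top_iff.mpr (h1 ▸ sup_le_sup_left commutator_le_frattini _)
  exact frattini_nongenerating h2

set_option maxHeartbeats 1000000 in
/-- In a finite `p`-group with `p` an odd prime, if `s` is conjugate to `r` by an element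
of the subgroup generated by `r` and `s`, then `r` and `s` commute. -/
theorem commute_of_conj_in_closure_of_odd_pGroup
    {p : ℕ} (hp : p.Prime) (hodd : Odd p) {P : Type*} [Group P] [Finite P]
    (hP : IsPGroup p P) (r s : P)
    (hconj : ∃ h ∈ Subgroup.closure ({r, s} : Set P), h * r * h⁻¹ = s) :
    r * s = s * r := by
  obtain ⟨h, hh, hhr⟩ := hconj
  set H := Subgroup.closure ({r, s} : Set P)
  have hr : r ∈ H := Subgroup.subset_closure (by simp)
  have hs : s ∈ H := Subgroup.subset_closure (by simp)
  set r' : H := ⟨r, hr⟩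
  set s' : H := ⟨s, hs⟩
  set h' : H := ⟨h, hh⟩
  haveI : Fact p.Prime := ⟨hp⟩
  haveI : Group.IsNilpotent H := (hP.to_subgroup H).isNilpotent
  have htop : Subgroup.closure (H.subtype ⁻¹' ({r, s} : Set P)) = ⊤ :=
    Subgroup.closure_preimage_eq_top _
  have hset : (H.subtype ⁻¹' ({r, s} : Set P)) = {r', s'} := by
    ext x
    simp [r', s', Subtype.ext_iff]
  rw [hset] at htop
  have hconj' : h' * r' * h'⁻¹ = s' := Subtype.ext (by simpa using hhr)
  have hnc : Subgroup.normalClosure ({r'} : Set H) = ⊤ := by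
    rw [eq_top_iff, ← htop, Subgroup.closure_le]
    rintro x (rfl | rfl)
    · exact Subgroup.subset_normalClosure rfl
    · rw [← hconj']
      have h1 : r' ∈ Subgroup.normalClosure ({r'} : Set H) :=
        Subgroup.subset_normalClosure rfl
      exact (Subgroup.normalClosure_normal (s := ({r'} : Set H))).conj_mem r' h1 h'
  have hz := zpowers_eq_top_of_normalClosure hnc
  have hmem : s' ∈ Subgroup.zpowers r' := hz ▸ Subgroup.mem_top s'
  obtain ⟨n, hn⟩ := hmem
  have hcomm : r' * s' = s' * r' := by
    rw [← hn]
    exact ((Commute.refl r').zpow_right n).eq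
  exact congrArg Subtype.val hcomm
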